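/- arXiv:2511.00944 — 2 statements merged into one kernel-verified Lean document; each statement's English description precedes it below -/
import Mathlib

section
/- Let σ > 0 and u ≠ 0. Let (Y_j)_{j≥1} be an i.i.d. sequence of real random variables with law N(0,σ²), and let (J_j)_{j≥1} be an i.i.d. sequence, independent of (Y_j), whose common law is symmetric and satisfies ψ := E[cos(u·J₁)] > 0. Apply the ECF spot variance estimator to the noisy observations W_j := Y_j + J_j, i.e. σ̂²_k := −(2/u²)·log( max( (1/k)·∑_{j=1}^{k} cos(u·W_j), k^{−1/2} ) ). Then σ̂²_k → σ² − (2/u²)·log ψ almost surely as k → ∞. (This identifies the additive bias −(2/u²)·log ψ of the estimator in the presence of an independent symmetric jump component, corresponding to the bias term b_{t,n}(u) of equation (3.3).) -/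
open MeasureTheory ProbabilityTheory Real Finset Filter
open scoped NNReal ENNReal Topology

section Aux
open Complex

lemma integral_rexp_mul_cos (u : ℝ) {v : ℝ≥0} (hv : v ≠ 0) :
    ∫ x : ℝ, Real.exp (-x ^ 2 / (2 * v)) * Real.cos (u * x)
      = Real.sqrt (2 * π * v) * Real.exp (-(u ^ 2 * v) / 2) := by
  have hv0 : (0:ℝ) < (v:ℝ) := lt_of_le_of_ne v.2 (by exact_mod_cast (Ne.symm hv))
  set b : ℂ := ((1 / (2 * (v:ℝ)) : ℝ) : ℂ) with hb_def
  have hb : 0 < b.re := by simp [hb_def]; positivity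
  have key := fourierIntegral_gaussian hb (u : ℂ)
  have hF : ∀ x : ℝ, Complex.exp (I * u * x) * Complex.exp (-b * x ^ 2)
      = Complex.exp (-b * x ^ 2 + ((u : ℂ) * I) * x + 0) := by
    intro x; rw [← Complex.exp_add]; ring_nf
  have hint : Integrable fun x : ℝ => Complex.exp (I * u * x) * Complex.exp (-b * x ^ 2) := by
    simp_rw [hF]
    exact integrable_cexp_quadratic hb _ _
  have hre : ∀ x : ℝ, (Complex.exp (I * u * x) * Complex.exp (-b * x ^ 2)).re
      = Real.exp (-x ^ 2 / (2 * v)) * Real.cos (u * x) := by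
    intro x
    have h1 : (I * u * x : ℂ) = ((u * x : ℝ) : ℂ) * I := by push_cast; ring
    have h2 : (-b * x ^ 2 : ℂ) = ((-x ^ 2 / (2 * v) : ℝ) : ℂ) := by
      rw [hb_def]; push_cast; ring
    rw [h1, h2, ← Complex.ofReal_exp, Complex.exp_mul_I, ← Complex.ofReal_cos,
      ← Complex.ofReal_sin]
    simp only [Complex.add_re, Complex.add_im, Complex.mul_re, Complex.mul_im,
      Complex.ofReal_re, Complex.ofReal_im, Complex.I_re, Complex.I_im]
    ring
  have lhs_eq : (∫ x : ℝ, Complex.exp (I * u * x) * Complex.exp (-b * x ^ 2)).re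
      = ∫ x : ℝ, Real.exp (-x ^ 2 / (2 * v)) * Real.cos (u * x) := by
    rw [show (∫ x : ℝ, Complex.exp (I * u * x) * Complex.exp (-b * x ^ 2)).re
        = RCLike.re (∫ x : ℝ, Complex.exp (I * u * x) * Complex.exp (-b * x ^ 2)) from rfl,
      ← integral_re hint]
    exact integral_congr_ae (Filter.Eventually.of_forall fun x => hre x)
  have hπb : (↑π / b : ℂ) = ((2 * π * v : ℝ) : ℂ) := by
    rw [hb_def]; push_cast
    field_simp
  have hexp : (-(u:ℂ) ^ 2 / (4 * b)) = ((-(u ^ 2 * v) / 2 : ℝ) : ℂ) := by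
    rw [hb_def]; push_cast
    field_simp
    ring
  have hrhs : ((↑π / b) ^ (1 / 2 : ℂ) * Complex.exp (-(u:ℂ) ^ 2 / (4 * b))).re
      = Real.sqrt (2 * π * v) * Real.exp (-(u ^ 2 * v) / 2) := by
    rw [hπb, hexp, ← Complex.ofReal_exp]
    rw [show (1 / 2 : ℂ) = ((1 / 2 : ℝ) : ℂ) by norm_num]
    rw [← Complex.ofReal_cpow (by positivity)]
    rw [← Complex.ofReal_mul]
    rw [Complex.ofReal_re]
    rw [Real.sqrt_eq_rpow]
  rw [← lhs_eq, key, hrhs]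

lemma integral_cos_gaussianReal (u : ℝ) {v : ℝ≥0} (hv : v ≠ 0) :
    ∫ x, Real.cos (u * x) ∂(gaussianReal 0 v) = Real.exp (-(u ^ 2 * v) / 2) := by
  have hπv : (0:ℝ) < 2 * π * v := by
    have hv0 : (0:ℝ) < (v:ℝ) := lt_of_le_of_ne v.2 (by exact_mod_cast (Ne.symm hv))
    positivity
  rw [gaussianReal_of_var_ne_zero 0 hv]
  rw [show gaussianPDF 0 v = fun x => ((gaussianPDFReal 0 v x).toNNReal : ℝ≥0∞) from rfl]
  rw [integral_withDensity_eq_integral_smul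
    ((measurable_gaussianPDFReal 0 v).real_toNNReal) _]
  have : ∀ x : ℝ, (gaussianPDFReal 0 v x).toNNReal • Real.cos (u * x)
      = (Real.sqrt (2 * π * v))⁻¹ * (Real.exp (-x ^ 2 / (2 * v)) * Real.cos (u * x)) := by
    intro x
    rw [NNReal.smul_def, Real.coe_toNNReal _ (gaussianPDFReal_nonneg 0 v x)]
    simp only [gaussianPDFReal, sub_zero, smul_eq_mul]
    ring
  rw [integral_congr_ae (Filter.Eventually.of_forall this), integral_const_mul,
    integral_rexp_mul_cos u hv, ← mul_assoc, inv_mul_cancel₀ (by positivity), one_mul]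

lemma integral_sin_symm (μ : Measure ℝ) [IsProbabilityMeasure μ]
    (h : μ.map (fun x => -x) = μ) (u : ℝ) : ∫ x, Real.sin (u * x) ∂μ = 0 := by
  have hm : AEStronglyMeasurable (fun x => Real.sin (u * x)) μ :=
    (Real.continuous_sin.comp (continuous_const.mul continuous_id)).measurable.aestronglyMeasurable
  have key : (∫ x, Real.sin (u * x) ∂μ) = - ∫ x, Real.sin (u * x) ∂μ := by
    have h2 := integral_map (μ := μ) (φ := fun x : ℝ => -x) (f := fun x => Real.sin (u * x))
      measurable_neg.aemeasurable (by rw [h]; exact hm)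
    rw [h] at h2
    simp_rw [mul_neg, Real.sin_neg] at h2
    rwa [integral_neg] at h2
  linarith

lemma gaussian_neg_symm {v : ℝ≥0} :
    (gaussianReal 0 v).map (fun x => -x) = gaussianReal 0 v := by
  have := gaussianReal_map_const_mul (μ := 0) (v := v) (-1)
  simp only [neg_one_mul, mul_zero] at this
  convert this using 2
  ext
  push_cast
  ring

lemma sum_Icc_one_eq_sum_range (f : ℕ → ℝ) (k : ℕ) :
    ∑ j ∈ Finset.Icc 1 k, f j = ∑ i ∈ Finset.range k, f (i + 1) := by
  induction k with
  | zero => simp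
  | succ n ih => rw [Finset.sum_Icc_succ_top (by omega), ih, Finset.sum_range_succ]

lemma tendsto_inv_sqrt_nat : Tendsto (fun k : ℕ => (Real.sqrt k)⁻¹) atTop (𝓝 0) := by
  have h2 : Tendsto Real.sqrt atTop atTop := by
    refine tendsto_atTop_atTop.2 fun c => ⟨(max c 0) ^ 2, fun a ha => ?_⟩
    have h := Real.sqrt_le_sqrt ha
    rw [Real.sqrt_sq (le_max_right c 0)] at h
    exact le_trans (le_max_left c 0) h
  exact (h2.comp tendsto_natCast_atTop_atTop).inv_tendsto_atTop


end Aux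

/-- Bias of the ECF spot variance estimator under an independent symmetric jump
component: with `W_j = Y_j + J_j`, the estimator converges a.s. to
`σ² − (2/u²)·log ψ` where `ψ = E[cos(u·J₁)] > 0`. -/
theorem ecf_spot_variance_estimator_bias {Ω : Type*} [MeasureSpace Ω]
    [IsProbabilityMeasure (ℙ : Measure Ω)]
    (σ u : ℝ) (hσ : 0 < σ) (hu : u ≠ 0)
    (Y J : ℕ → Ω → ℝ)
    (hmeas : ∀ i : ℕ ⊕ ℕ, Measurable (Sum.elim Y J i))
    -- all the variables `Y₁, J₁, Y₂, J₂, …` are jointly independent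
    (hindep : iIndepFun (Sum.elim Y J) ℙ)
    -- `(Y_j)` is i.i.d. `N(0,σ²)`
    (hYlaw : ∀ j, Measure.map (Y j) ℙ = gaussianReal 0 ⟨σ ^ 2, sq_nonneg σ⟩)
    -- `(J_j)` is i.i.d. with a symmetric common law
    (hJid : ∀ j, Measure.map (J j) ℙ = Measure.map (J 1) ℙ)
    (hJsym : Measure.map (fun ω => -(J 1 ω)) ℙ = Measure.map (J 1) ℙ)
    -- `ψ := E[cos(u·J₁)] > 0`
    (hψ : 0 < ∫ ω, Real.cos (u * J 1 ω) ∂ℙ)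
    (W : ℕ → Ω → ℝ) (hW : ∀ j ω, W j ω = Y j ω + J j ω)
    (est : ℕ → Ω → ℝ)
    (hest : ∀ k ω, est k ω
      = -(2 / u ^ 2) * Real.log
          (max ((1 / (k : ℝ)) * ∑ j ∈ Finset.Icc 1 k, Real.cos (u * W j ω))
            ((Real.sqrt k)⁻¹))) :
    ∀ᵐ ω ∂ℙ, Tendsto (fun k => est k ω) atTop
      (nhds (σ ^ 2 - (2 / u ^ 2) * Real.log (∫ ω, Real.cos (u * J 1 ω) ∂ℙ))) := by
  classical
  set v : ℝ≥0 := ⟨σ ^ 2, sq_nonneg σ⟩ with hv_def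
  have hv : v ≠ 0 := by
    intro hc
    have : σ ^ 2 = 0 := congrArg NNReal.toReal hc
    exact (pow_ne_zero 2 hσ.ne') this
  set ψ : ℝ := ∫ ω, Real.cos (u * J 1 ω) ∂ℙ with hψ_def
  have hYm : ∀ j, Measurable (Y j) := fun j => hmeas (Sum.inl j)
  have hJm : ∀ j, Measurable (J j) := fun j => hmeas (Sum.inr j)
  have hWm : ∀ j, Measurable (W j) := fun j => by
    have hWe : W j = fun ω => Y j ω + J j ω := funext (hW j)
    rw [hWe]; exact (hYm j).add (hJm j)
  have hcosm : Measurable fun x : ℝ => Real.cos (u * x) :=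
    (Real.continuous_cos.comp (continuous_const.mul continuous_id)).measurable
  have hsinm : Measurable fun x : ℝ => Real.sin (u * x) :=
    (Real.continuous_sin.comp (continuous_const.mul continuous_id)).measurable
  -- the law of each W j
  have hWlaw : ∀ j, Measure.map (W j) ℙ
      = ((gaussianReal 0 v).prod (Measure.map (J 1) ℙ)).map (fun p : ℝ × ℝ => p.1 + p.2) := by
    intro j
    have hind_j : IndepFun (Y j) (J j) ℙ :=
      hindep.indepFun (show (Sum.inl j : ℕ ⊕ ℕ) ≠ Sum.inr j by simp)
    have hprod : Measure.map (fun ω => (Y j ω, J j ω)) ℙ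
        = (Measure.map (Y j) ℙ).prod (Measure.map (J j) ℙ) :=
      (indepFun_iff_map_prod_eq_prod_map_map (hYm j).aemeasurable (hJm j).aemeasurable).1 hind_j
    have hWe : W j = (fun p : ℝ × ℝ => p.1 + p.2) ∘ (fun ω => (Y j ω, J j ω)) :=
      funext fun ω => hW j ω
    rw [hWe, ← Measure.map_map (g := fun p : ℝ × ℝ => p.1 + p.2) (measurable_fst.add measurable_snd)
      ((hYm j).prodMk (hJm j)), hprod, hYlaw j, hJid j]
  -- the mean
  set m : ℝ := ∫ ω, Real.cos (u * W 1 ω) ∂ℙ with hm_def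
  have hJ1sym : (Measure.map (J 1) ℙ).map (fun x : ℝ => -x) = Measure.map (J 1) ℙ := by
    rw [Measure.map_map measurable_neg (hJm 1)]
    exact hJsym
  have : IsProbabilityMeasure (Measure.map (J 1) ℙ) :=
    Measure.isProbabilityMeasure_map (hJm 1).aemeasurable
  have hcosY : ∫ ω, Real.cos (u * Y 1 ω) ∂ℙ = Real.exp (-(u ^ 2 * v) / 2) := by
    rw [show (fun ω => Real.cos (u * Y 1 ω)) = fun ω => (fun x => Real.cos (u * x)) (Y 1 ω)
      from rfl, ← integral_map (hYm 1).aemeasurable hcosm.aestronglyMeasurable, hYlaw 1]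
    exact integral_cos_gaussianReal u hv
  have hsinY : ∫ ω, Real.sin (u * Y 1 ω) ∂ℙ = 0 := by
    rw [show (fun ω => Real.sin (u * Y 1 ω)) = fun ω => (fun x => Real.sin (u * x)) (Y 1 ω)
      from rfl, ← integral_map (hYm 1).aemeasurable hsinm.aestronglyMeasurable, hYlaw 1]
    exact integral_sin_symm _ gaussian_neg_symm u
  have hsinJ : ∫ ω, Real.sin (u * J 1 ω) ∂ℙ = 0 := by
    rw [show (fun ω => Real.sin (u * J 1 ω)) = fun ω => (fun x => Real.sin (u * x)) (J 1 ω)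
      from rfl, ← integral_map (hJm 1).aemeasurable hsinm.aestronglyMeasurable]
    exact integral_sin_symm _ hJ1sym u
  have hYJ : IndepFun (Y 1) (J 1) ℙ :=
    hindep.indepFun (show (Sum.inl 1 : ℕ ⊕ ℕ) ≠ Sum.inr 1 by simp)
  have hm_eq : m = Real.exp (-(u ^ 2 * v) / 2) * ψ := by
    have hsplit : ∀ ω, Real.cos (u * W 1 ω)
        = Real.cos (u * Y 1 ω) * Real.cos (u * J 1 ω)
          - Real.sin (u * Y 1 ω) * Real.sin (u * J 1 ω) := by
      intro ω; rw [hW, mul_add, Real.cos_add]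
    have hintA : Integrable (fun ω => Real.cos (u * Y 1 ω) * Real.cos (u * J 1 ω)) ℙ := by
      refine (integrable_const 1).mono'
        ((hcosm.comp (hYm 1)).mul (hcosm.comp (hJm 1))).aestronglyMeasurable
        (Filter.Eventually.of_forall fun ω => ?_)
      rw [Real.norm_eq_abs, abs_mul]
      exact mul_le_one₀ (Real.abs_cos_le_one _) (abs_nonneg _) (Real.abs_cos_le_one _)
    have hintB : Integrable (fun ω => Real.sin (u * Y 1 ω) * Real.sin (u * J 1 ω)) ℙ := by
      refine (integrable_const 1).mono'
        ((hsinm.comp (hYm 1)).mul (hsinm.comp (hJm 1))).aestronglyMeasurable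
        (Filter.Eventually.of_forall fun ω => ?_)
      rw [Real.norm_eq_abs, abs_mul]
      exact mul_le_one₀ (Real.abs_sin_le_one _) (abs_nonneg _) (Real.abs_sin_le_one _)
    have hcc : IndepFun (fun ω => Real.cos (u * Y 1 ω)) (fun ω => Real.cos (u * J 1 ω)) ℙ :=
      hYJ.comp hcosm hcosm
    have hss : IndepFun (fun ω => Real.sin (u * Y 1 ω)) (fun ω => Real.sin (u * J 1 ω)) ℙ :=
      hYJ.comp hsinm hsinm
    calc m = ∫ ω, (Real.cos (u * Y 1 ω) * Real.cos (u * J 1 ω)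
          - Real.sin (u * Y 1 ω) * Real.sin (u * J 1 ω)) ∂ℙ := by
            rw [hm_def]; exact integral_congr_ae (Filter.Eventually.of_forall hsplit)
      _ = (∫ ω, Real.cos (u * Y 1 ω) * Real.cos (u * J 1 ω) ∂ℙ)
          - ∫ ω, Real.sin (u * Y 1 ω) * Real.sin (u * J 1 ω) ∂ℙ := integral_sub hintA hintB
      _ = (∫ ω, Real.cos (u * Y 1 ω) ∂ℙ) * (∫ ω, Real.cos (u * J 1 ω) ∂ℙ)
          - (∫ ω, Real.sin (u * Y 1 ω) ∂ℙ) * ∫ ω, Real.sin (u * J 1 ω) ∂ℙ := by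
            rw [← hcc.integral_mul_eq_mul_integral (hcosm.comp (hYm 1)).aestronglyMeasurable
                (hcosm.comp (hJm 1)).aestronglyMeasurable,
              ← hss.integral_mul_eq_mul_integral (hsinm.comp (hYm 1)).aestronglyMeasurable
                (hsinm.comp (hJm 1)).aestronglyMeasurable]
            rfl
      _ = Real.exp (-(u ^ 2 * v) / 2) * ψ := by rw [hcosY, hsinY, hsinJ]; ring
  have hm_pos : 0 < m := by
    rw [hm_eq]; exact mul_pos (Real.exp_pos _) hψ
  -- strong law of large numbers
  set X : ℕ → Ω → ℝ := fun i ω => Real.cos (u * W (i + 1) ω) with hX_def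
  have hXm : ∀ i, Measurable (X i) := fun i => hcosm.comp (hWm (i + 1))
  have hint : Integrable (X 0) ℙ := by
    refine (integrable_const 1).mono' (hXm 0).aestronglyMeasurable
      (Filter.Eventually.of_forall fun ω => ?_)
    rw [Real.norm_eq_abs]; exact Real.abs_cos_le_one _
  have hpair : Pairwise (Function.onFun (IndepFun · · ℙ) X) := by
    intro i j hij
    have h := hindep.indepFun_prodMk_prodMk hmeas
      (Sum.inl (i + 1)) (Sum.inr (i + 1)) (Sum.inl (j + 1)) (Sum.inr (j + 1))
      (by simp [hij]) (by simp) (by simp) (by simp [hij])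
    have hg : Measurable fun p : ℝ × ℝ => Real.cos (u * (p.1 + p.2)) := by
      exact hcosm.comp (measurable_fst.add measurable_snd)
    have h2 := h.comp hg hg
    have e1 : (fun p : ℝ × ℝ => Real.cos (u * (p.1 + p.2)))
        ∘ (fun a => (Sum.elim Y J (Sum.inl (i + 1)) a, Sum.elim Y J (Sum.inr (i + 1)) a))
        = X i := funext fun ω => by simp [hX_def, hW, Function.comp]
    have e2 : (fun p : ℝ × ℝ => Real.cos (u * (p.1 + p.2)))
        ∘ (fun a => (Sum.elim Y J (Sum.inl (j + 1)) a, Sum.elim Y J (Sum.inr (j + 1)) a))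
        = X j := funext fun ω => by simp [hX_def, hW, Function.comp]
    rwa [e1, e2] at h2
  have hident : ∀ i, IdentDistrib (X i) (X 0) ℙ ℙ := by
    intro i
    have hWid : IdentDistrib (W (i + 1)) (W 1) ℙ ℙ :=
      ⟨(hWm _).aemeasurable, (hWm 1).aemeasurable, by rw [hWlaw (i + 1), hWlaw 1]⟩
    exact hWid.comp hcosm
  have hSLLN := strong_law_ae_real X hint hpair hident
  have hEX0 : (ℙ : Measure Ω)[X 0] = m := rfl
  rw [hEX0] at hSLLN
  -- conclude
  have hlogm : -(2 / u ^ 2) * Real.log m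
      = σ ^ 2 - (2 / u ^ 2) * Real.log ψ := by
    rw [hm_eq, Real.log_mul (Real.exp_ne_zero _) hψ.ne', Real.log_exp]
    have hv_coe : ((v : ℝ)) = σ ^ 2 := rfl
    rw [hv_coe]
    have hu2 : u ^ 2 ≠ 0 := pow_ne_zero 2 hu
    field_simp
    ring
  filter_upwards [hSLLN] with ω hω
  have h1 : Tendsto (fun k : ℕ => (1 / (k : ℝ)) * ∑ j ∈ Finset.Icc 1 k,
      Real.cos (u * W j ω)) atTop (𝓝 m) := by
    have he : (fun k : ℕ => (1 / (k : ℝ)) * ∑ j ∈ Finset.Icc 1 k, Real.cos (u * W j ω))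
        = fun k : ℕ => (∑ i ∈ Finset.range k, X i ω) / k := by
      funext k
      rw [sum_Icc_one_eq_sum_range (fun j => Real.cos (u * W j ω)) k]
      rw [one_div, inv_mul_eq_div]
    rw [he]
    exact hω
  have h3 : Tendsto (fun k : ℕ => max ((1 / (k : ℝ)) * ∑ j ∈ Finset.Icc 1 k,
      Real.cos (u * W j ω)) ((Real.sqrt k)⁻¹)) atTop (𝓝 m) := by
    have := h1.max tendsto_inv_sqrt_nat
    rwa [max_eq_left hm_pos.le] at this
  have h4 := ((Real.continuousAt_log hm_pos.ne').tendsto.comp h3).const_mul (-(2 / u ^ 2))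
  rw [hlogm] at h4
  have he2 : (fun k => est k ω) = fun k : ℕ => -(2 / u ^ 2) * Real.log
      (max ((1 / (k : ℝ)) * ∑ j ∈ Finset.Icc 1 k, Real.cos (u * W j ω))
        ((Real.sqrt k)⁻¹)) := funext fun k => hest k ω
  rw [he2]
  exact h4
end

section
/- The limit lim_{k→∞} (3/k⁵)·∑_{m=1}^{k} (k−m)·(∑_{s=m+1}^{k} s² + ∑_{s=1}^{k−m} s²) = 13/20 holds. (This Riemann-sum limit produces the coefficient 13/20 of the cross term h₁·h₂ in the covariance summation of Lemma 4, used for the asymptotic variance of the volatility of volatility estimator in Theorem 2.) -/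
open Filter Finset

private lemma pow1_sum (n : ℕ) :
    ∑ m ∈ Finset.Icc 1 n, (m : ℝ) = n * (n + 1) / 2 := by
  induction n with
  | zero => simp
  | succ n ih =>
    rw [Finset.sum_Icc_succ_top (by omega)]
    push_cast
    rw [ih]; ring

private lemma pow2_sum (n : ℕ) :
    ∑ m ∈ Finset.Icc 1 n, (m : ℝ) ^ 2 = n * (n + 1) * (2 * n + 1) / 6 := by
  induction n with
  | zero => simp
  | succ n ih =>
    rw [Finset.sum_Icc_succ_top (by omega)]
    push_cast
    rw [ih]; ring

private lemma pow3_sum (n : ℕ) :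
    ∑ m ∈ Finset.Icc 1 n, (m : ℝ) ^ 3 = (n * (n + 1) / 2) ^ 2 := by
  induction n with
  | zero => simp
  | succ n ih =>
    rw [Finset.sum_Icc_succ_top (by omega)]
    push_cast
    rw [ih]; ring

private lemma pow4_sum (n : ℕ) :
    ∑ m ∈ Finset.Icc 1 n, (m : ℝ) ^ 4
      = n * (n + 1) * (2 * n + 1) * (3 * n ^ 2 + 3 * n - 1) / 30 := by
  induction n with
  | zero => simp
  | succ n ih =>
    rw [Finset.sum_Icc_succ_top (by omega)]
    push_cast
    rw [ih]; ring

private lemma main_sum (k : ℕ) :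
    ∑ m ∈ Finset.Icc 1 k,
        ((k : ℝ) - (m : ℝ))
          * (∑ s ∈ Finset.Icc (m + 1) k, (s : ℝ) ^ 2
              + ∑ s ∈ Finset.Icc 1 (k - m), (s : ℝ) ^ 2)
      = 13 * (k : ℝ) ^ 5 / 60 - (k : ℝ) ^ 3 / 4 + (k : ℝ) / 30 := by
  have hcong : ∀ m ∈ Finset.Icc 1 k,
      ((k : ℝ) - (m : ℝ))
          * (∑ s ∈ Finset.Icc (m + 1) k, (s : ℝ) ^ 2
              + ∑ s ∈ Finset.Icc 1 (k - m), (s : ℝ) ^ 2)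
      = (2/3 * (k:ℝ)^4 + (k:ℝ)^3 + 1/3 * (k:ℝ)^2)
        + (-2/3 * (k:ℝ) - 5/3 * (k:ℝ)^3 - 2 * (k:ℝ)^2) * (m:ℝ)
        + (2 * (k:ℝ)^2 + (k:ℝ) + 1/3) * (m:ℝ)^2
        + (-5/3 * (k:ℝ)) * (m:ℝ)^3
        + (2/3) * (m:ℝ)^4 := by
    intro m hm
    rw [Finset.mem_Icc] at hm
    obtain ⟨hm1, hmk⟩ := hm
    have h1 : ∑ s ∈ Finset.Icc (m + 1) k, (s : ℝ) ^ 2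
        = k * (k + 1) * (2 * k + 1) / 6 - m * (m + 1) * (2 * m + 1) / 6 := by
      have hc : (∑ s ∈ Finset.Ioc 0 m, (s : ℝ) ^ 2)
          + ∑ s ∈ Finset.Ioc m k, (s : ℝ) ^ 2 = ∑ s ∈ Finset.Ioc 0 k, (s : ℝ) ^ 2 :=
        Finset.sum_Ioc_consecutive _ (Nat.zero_le m) hmk
      have e1 : Finset.Ioc 0 m = Finset.Icc 1 m := rfl
      have e2 : Finset.Ioc 0 k = Finset.Icc 1 k := rfl
      have e3 : Finset.Ioc m k = Finset.Icc (m + 1) k := (Finset.Icc_add_one_left_eq_Ioc ..).symm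
      rw [e1, e2, e3, pow2_sum, pow2_sum] at hc
      linarith
    have h2 : ∑ s ∈ Finset.Icc 1 (k - m), (s : ℝ) ^ 2
        = ((k:ℝ) - m) * (((k:ℝ) - m) + 1) * (2 * ((k:ℝ) - m) + 1) / 6 := by
      rw [pow2_sum, Nat.cast_sub hmk]
    rw [h1, h2]; ring
  rw [Finset.sum_congr rfl hcong]
  simp only [Finset.sum_add_distrib, ← Finset.mul_sum, Finset.sum_const,
    Nat.card_Icc, nsmul_eq_mul, Nat.add_sub_cancel]
  rw [pow1_sum, pow2_sum, pow3_sum, pow4_sum]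
  ring

/-- Riemann-sum limit producing the coefficient `13/20`:
`(3/k⁵)·∑_{m=1}^{k} (k−m)(∑_{s=m+1}^{k} s² + ∑_{s=1}^{k−m} s²) → 13/20`. -/
theorem riemann_sum_limit_thirteen_twentieths :
    Tendsto
      (fun k : ℕ =>
        (3 / (k : ℝ) ^ 5)
          * ∑ m ∈ Finset.Icc 1 k,
              ((k : ℝ) - (m : ℝ))
                * (∑ s ∈ Finset.Icc (m + 1) k, (s : ℝ) ^ 2
                    + ∑ s ∈ Finset.Icc 1 (k - m), (s : ℝ) ^ 2))
      atTop (nhds (13 / 20)) := by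
  have h0 : Tendsto (fun k : ℕ => (1 : ℝ) / k) atTop (nhds 0) :=
    tendsto_one_div_atTop_nhds_zero_nat
  have h : Tendsto
      (fun k : ℕ => 13/20 - 3/4 * ((1:ℝ)/k)^2 + 1/10 * ((1:ℝ)/k)^4)
      atTop (nhds (13/20 - 3/4 * (0:ℝ)^2 + 1/10 * (0:ℝ)^4)) := by
    exact ((tendsto_const_nhds.sub ((h0.pow 2).const_mul _)).add
      ((h0.pow 4).const_mul _))
  norm_num at h
  refine h.congr' ?_
  filter_upwards [eventually_ge_atTop 1] with k hk
  have hk0 : (k : ℝ) ≠ 0 := by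
    exact (Nat.cast_pos.mpr (by omega : 0 < k)).ne'
  rw [main_sum]
  field_simp
  ring
end
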